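/- Perfect simulation: for every M in Λ_{00a}, if M reduces to N at depth n in Λ_{00a}, then ⟨M⟩_a reduces to ⟨N⟩_a in ℓΛ∞ by one step at a level containing exactly n occurrences of the coinductive-box marker; conversely, every reduction step from ⟨M⟩_a is the image of a step from M. -/
import Mathlib


namespace LLInf

/-- Node labels of preterms of the linear infinitary λ-calculus ℓΛ∞. -/
inductive Shape where
  | var (x : ℕ)
  | app
  | labs (x : ℕ)
  | iabs (x : ℕ)
  | cabs (x : ℕ)
  | ibox
  | cbox
deriving DecidableEq

/-- Preterms: possibly infinite trees, encoded by their (partial) position function. -/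
def T : Type := List ℕ → Option Shape

def mk0 (s : Shape) : T := fun p => if p = [] then some s else none

def mk1 (s : Shape) (M : T) : T := fun p =>
  match p with
  | [] => some s
  | 0 :: q => M q
  | _ => none

def mk2 (M N : T) : T := fun p =>
  match p with
  | [] => some Shape.app
  | 0 :: q => M q
  | 1 :: q => N q
  | _ => none

def child (M : T) (i : ℕ) : T := fun p => M (i :: p)

def bindsX (x : ℕ) : Option Shape → Bool
  | some (Shape.labs y) => y == x
  | some (Shape.iabs y) => y == x
  | some (Shape.cabs y) => y == x
  | _ => false

/-- Capture-avoiding (shadowing-respecting) substitution on positional preterms. -/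
def substF (x : ℕ) (N : T) : T → List ℕ → Option Shape
  | M, [] => if M [] = some (Shape.var x) then N [] else M []
  | M, i :: q =>
      if M [] = some (Shape.var x) then N (i :: q)
      else if bindsX x (M []) then M (i :: q)
      else substF x N (child M i) q
termination_by M p => p.length

def subst (x : ℕ) (N M : T) : T := fun p => substF x N M p

def FreeAt (x : ℕ) : T → List ℕ → Prop
  | M, [] => M [] = some (Shape.var x)
  | M, i :: q => bindsX x (M []) = false ∧ FreeAt x (child M i) q
termination_by M p => p.length

/-- `x` occurs free in `M`. -/
def Free (x : ℕ) (M : T) : Prop := ∃ p, FreeAt x M p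

def arity : Shape → ℕ
  | Shape.var _ => 0
  | Shape.app => 2
  | _ => 1

/-- The position function is a coherent (constructor-generated) tree. -/
def IsPre (M : T) : Prop :=
  (∃ s, M [] = some s) ∧
  (∀ p t, M p = some t → ∀ i, (∃ s, M (p ++ [i]) = some s) ↔ i < arity t) ∧
  (∀ p q, M p = none → M (p ++ q) = none)

/-- Basic reduction of ℓΛ∞. -/
inductive Basic : T → T → Prop
  | lin (x : ℕ) (M N : T) :
      Basic (mk2 (mk1 (Shape.labs x) M) N) (subst x N M)
  | ind (x : ℕ) (M N : T) :
      Basic (mk2 (mk1 (Shape.iabs x) M) (mk1 Shape.ibox N)) (subst x N M)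
  | coi (x : ℕ) (M N : T) :
      Basic (mk2 (mk1 (Shape.cabs x) M) (mk1 Shape.cbox N)) (subst x N M)

/-- One-step reduction, indexed by the level: the list of boxes crossed,
`false` for an inductive box, `true` for a coinductive box. -/
inductive Red : List Bool → T → T → Prop
  | base {M N} : Basic M N → Red [] M N
  | appL {s M N} (P) : Red s M N → Red s (mk2 M P) (mk2 N P)
  | appR {s M N} (P) : Red s M N → Red s (mk2 P M) (mk2 P N)
  | labs {s M N} (x) : Red s M N → Red s (mk1 (Shape.labs x) M) (mk1 (Shape.labs x) N)
  | iabs {s M N} (x) : Red s M N → Red s (mk1 (Shape.iabs x) M) (mk1 (Shape.iabs x) N)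
  | cabs {s M N} (x) : Red s M N → Red s (mk1 (Shape.cabs x) M) (mk1 (Shape.cabs x) N)
  | ibox {s M N} : Red s M N → Red (false :: s) (mk1 Shape.ibox M) (mk1 Shape.ibox N)
  | cbox {s M N} : Red s M N → Red (true :: s) (mk1 Shape.cbox M) (mk1 Shape.cbox N)

def Red' (M N : T) : Prop := ∃ s, Red s M N

/-- Reduction at depth `n`: at a level crossing exactly `n` coinductive boxes. -/
def RedAt (n : ℕ) (M N : T) : Prop := ∃ s, s.count true = n ∧ Red s M N

def Star : T → T → Prop := Relation.ReflTransGen Red'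

/-! ### Environments and well-formation for ℓΛ∞ -/

inductive Pat where
  | lin | ind | coi
deriving DecidableEq

def Env : Type := ℕ → Option Pat

def Env.upd (Γ : Env) (x : ℕ) (p : Option Pat) : Env :=
  fun y => if y = x then p else Γ y

def Env.union (Γ Δ : Env) : Env := fun y => (Γ y).orElse (fun _ => Δ y)

def NoLin (Γ : Env) : Prop := ∀ y, Γ y ≠ some Pat.lin

def OnlyLinAt (Γ : Env) (x : ℕ) : Prop :=
  Γ x = some Pat.lin ∧ ∀ y, y ≠ x → Γ y ≠ some Pat.lin

/-- Splitting of an environment: nonlinear entries are shared, linear ones split. -/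
def Split (Γ Γ₁ Γ₂ : Env) : Prop := ∀ y,
  (Γ₁ y = Γ y ∧ Γ₂ y = Γ y ∧ Γ y ≠ some Pat.lin) ∨
  (Γ y = some Pat.lin ∧
    ((Γ₁ y = some Pat.lin ∧ Γ₂ y = none) ∨ (Γ₂ y = some Pat.lin ∧ Γ₁ y = none)))

/-- The inductive rules of the mixed formal system of ℓΛ∞, with `R` the
judgments provided by the coinductive layer. -/
inductive WFStep (R : Env → T → Prop) : Env → T → Prop
  | base {Γ M} : R Γ M → WFStep R Γ M
  | vl {Γ} (x) : OnlyLinAt Γ x → WFStep R Γ (mk0 (Shape.var x))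
  | vi {Γ} (x) : NoLin Γ → Γ x = some Pat.ind → WFStep R Γ (mk0 (Shape.var x))
  | vc {Γ} (x) : NoLin Γ → Γ x = some Pat.coi → WFStep R Γ (mk0 (Shape.var x))
  | app {Γ Γ₁ Γ₂ M N} : Split Γ Γ₁ Γ₂ → WFStep R Γ₁ M → WFStep R Γ₂ N →
      WFStep R Γ (mk2 M N)
  | ll {Γ x M} : Γ x = none → WFStep R (Γ.upd x (some Pat.lin)) M →
      WFStep R Γ (mk1 (Shape.labs x) M)
  | li {Γ x M} : Γ x = none → WFStep R (Γ.upd x (some Pat.ind)) M →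
      WFStep R Γ (mk1 (Shape.iabs x) M)
  | lc {Γ x M} : Γ x = none → WFStep R (Γ.upd x (some Pat.coi)) M →
      WFStep R Γ (mk1 (Shape.cabs x) M)
  | mi {Γ M} : NoLin Γ → WFStep R Γ M → WFStep R Γ (mk1 Shape.ibox M)

/-- One application of the unique coinductive rule (mc). -/
def CoStep (S : Env → T → Prop) (Γ : Env) (M : T) : Prop :=
  NoLin Γ ∧ ∃ N, M = mk1 Shape.cbox N ∧ S Γ N

/-- Well-formation in ℓΛ∞: greatest fixed point of Ind ∘ Coind, presented via
consistent sets. -/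
def WF (Γ : Env) (M : T) : Prop :=
  ∃ S : Env → T → Prop, (∀ Δ N, S Δ N → WFStep (CoStep S) Δ N) ∧ S Γ M

/-! ### Infinitary reduction ⇒ and its auxiliary relation ⤳ -/

/-- One application of the coinductive ⇒-rule. `true` marks ⇒-judgments,
`false` marks ⤳-judgments. -/
def IRCo (S : Bool → T → T → Prop) (b : Bool) (M L : T) : Prop :=
  b = true ∧ ∃ N, Star M N ∧ S false N L

/-- The inductive ⤳-rules. -/
inductive IRInd (R : Bool → T → T → Prop) : Bool → T → T → Prop
  | base {b M N} : R b M N → IRInd R b M N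
  | varr (x) : IRInd R false (mk0 (Shape.var x)) (mk0 (Shape.var x))
  | app {M N P Q} : IRInd R false M N → IRInd R false P Q →
      IRInd R false (mk2 M P) (mk2 N Q)
  | labs {M N} (x) : IRInd R false M N →
      IRInd R false (mk1 (Shape.labs x) M) (mk1 (Shape.labs x) N)
  | iabs {M N} (x) : IRInd R false M N →
      IRInd R false (mk1 (Shape.iabs x) M) (mk1 (Shape.iabs x) N)
  | cabs {M N} (x) : IRInd R false M N →
      IRInd R false (mk1 (Shape.cabs x) M) (mk1 (Shape.cabs x) N)
  | ibox {M N} : IRInd R false M N →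
      IRInd R false (mk1 Shape.ibox M) (mk1 Shape.ibox N)
  | cbox {M N} : IRInd R true M N →
      IRInd R false (mk1 Shape.cbox M) (mk1 Shape.cbox N)

def IRSys (b : Bool) (M N : T) : Prop :=
  ∃ S : Bool → T → T → Prop,
    (∀ b' M' N', S b' M' N' → IRInd (IRCo S) b' M' N') ∧ S b M N

/-- Infinitary reduction M ⇒ N. -/
def Inf (M N : T) : Prop := IRSys true M N

/-- Auxiliary relation M ⤳ N. -/
def Next (M N : T) : Prop := IRSys false M N

def NormalForm (N : T) : Prop := ∀ s P, ¬ Red s N P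

end LLInf
namespace LLInf

/-! ### The infinitary λ-calculus Λ_{00a} and its Girard-style embedding -/

/-- Inductive rules for membership in Λ_{00a}: when `a = true` the argument
premise goes through the coinductive guard `S`. -/
inductive LamStep (a : Bool) (S : T → Prop) : T → Prop
  | var (x) : LamStep a S (mk0 (Shape.var x))
  | app0 {M N} : a = false → LamStep a S M → LamStep a S N → LamStep a S (mk2 M N)
  | app1 {M N} : a = true → LamStep a S M → S N → LamStep a S (mk2 M N)
  | lam {M} (x) : LamStep a S M → LamStep a S (mk1 (Shape.labs x) M)

/-- `M` is a term of Λ_{00a} (the depth increasing in argument position iff `a`). -/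
def Lam00 (a : Bool) (M : T) : Prop :=
  ∃ S : T → Prop, (∀ N, S N → LamStep a S N) ∧ S M

/-- The Girard-style embedding ⟨·⟩ₐ of Λ_{00a} into ℓΛ∞, positionally:
⟨x⟩ = x, ⟨MN⟩ = ⟨M⟩(◻ₐ⟨N⟩), ⟨λx.M⟩ = λ◻ₐx.⟨M⟩. -/
def embF (a : Bool) : T → List ℕ → Option Shape
  | M, [] =>
      match M [] with
      | some (Shape.var x) => some (Shape.var x)
      | some Shape.app => some Shape.app
      | some (Shape.labs x) => some (if a then Shape.cabs x else Shape.iabs x)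
      | _ => none
  | M, i :: q =>
      match M [] with
      | some Shape.app =>
          if i = 0 then embF a (child M 0) q
          else if i = 1 then
            match q with
            | [] => some (if a then Shape.cbox else Shape.ibox)
            | j :: r => if j = 0 then embF a (child M 1) r else none
          else none
      | some (Shape.labs _) => if i = 0 then embF a (child M 0) q else none
      | _ => none
termination_by M p => p.length
decreasing_by all_goals (simp [List.length_cons]; try omega)

def emb (a : Bool) (M : T) : T := fun p => embF a M p

/-- Reduction at depth `n` in Λ_{00a}: the depth increases only when entering
the second argument of an application, and only when `a = true`. -/
inductive LRed (a : Bool) : ℕ → T → T → Prop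
  | beta (x M N) : LRed a 0 (mk2 (mk1 (Shape.labs x) M) N) (subst x N M)
  | appL {n M N} (P) : LRed a n M N → LRed a n (mk2 M P) (mk2 N P)
  | lam {n M N} (x) : LRed a n M N →
      LRed a n (mk1 (Shape.labs x) M) (mk1 (Shape.labs x) N)
  | appR0 {n M N} (P) : a = false → LRed a n M N → LRed a n (mk2 P M) (mk2 P N)
  | appR1 {n M N} (P) : a = true → LRed a n M N → LRed a (n + 1) (mk2 P M) (mk2 P N)

/-- The environment ◻ₐ(FV(M)): every free variable of `M`, marked inductive
(a = false) or coinductive (a = true). -/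
noncomputable def envOf (a : Bool) (M : T) : Env := fun y =>
  @ite _ (Free y M) (Classical.dec _) (some (if a then Pat.coi else Pat.ind)) none

/-- The defining (guarded) equations of capture-avoiding substitution. -/
def SubstEqs (f : ℕ → T → T → T) : Prop :=
  ∀ x (N : T),
    f x N (mk0 (Shape.var x)) = N ∧
    (∀ y, y ≠ x → f x N (mk0 (Shape.var y)) = mk0 (Shape.var y)) ∧
    (∀ M P, f x N (mk2 M P) = mk2 (f x N M) (f x N P)) ∧
    (∀ y M, y ≠ x → f x N (mk1 (Shape.labs y) M) = mk1 (Shape.labs y) (f x N M)) ∧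
    (∀ M, f x N (mk1 (Shape.labs x) M) = mk1 (Shape.labs x) M) ∧
    (∀ y M, y ≠ x → f x N (mk1 (Shape.iabs y) M) = mk1 (Shape.iabs y) (f x N M)) ∧
    (∀ M, f x N (mk1 (Shape.iabs x) M) = mk1 (Shape.iabs x) M) ∧
    (∀ y M, y ≠ x → f x N (mk1 (Shape.cabs y) M) = mk1 (Shape.cabs y) (f x N M)) ∧
    (∀ M, f x N (mk1 (Shape.cabs x) M) = mk1 (Shape.cabs x) M) ∧
    (∀ M, f x N (mk1 Shape.ibox M) = mk1 Shape.ibox (f x N M)) ∧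
    (∀ M, f x N (mk1 Shape.cbox M) = mk1 Shape.cbox (f x N M))

end LLInf
namespace LLInf

/-! ### The calculus ℓΛ∞^{4S} -/

/-- Patterns of ℓΛ∞^{4S}: x, ↓x, !x, ↑x, #x. -/
inductive Pat4 where
  | lin | dm | im | cm | am
deriving DecidableEq

def Env4 : Type := ℕ → Option Pat4

def Env4.upd (Γ : Env4) (x : ℕ) (p : Option Pat4) : Env4 :=
  fun y => if y = x then p else Γ y

/-- Patterns shared between the premises of applications: ↓, ↑, #. -/
def Shared4 (p : Option Pat4) : Prop :=
  p = some Pat4.dm ∨ p = some Pat4.cm ∨ p = some Pat4.am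

/-- Environment containing only ↓, ↑, # patterns. -/
def Passive4 (Γ : Env4) : Prop := ∀ y, Γ y = none ∨ Shared4 (Γ y)

def Split4 (Γ Γ₁ Γ₂ : Env4) : Prop := ∀ y,
  (Shared4 (Γ y) ∧ Γ₁ y = Γ y ∧ Γ₂ y = Γ y) ∨
  (Γ y = none ∧ Γ₁ y = none ∧ Γ₂ y = none) ∨
  ((Γ y = some Pat4.lin ∨ Γ y = some Pat4.im) ∧
    ((Γ₁ y = Γ y ∧ Γ₂ y = none) ∨ (Γ₂ y = Γ y ∧ Γ₁ y = none)))

/-- Environment transformation of the (mi) rule: conclusion ↓Θ,!Ξ,↑Ψ,#Φ ⊢ !M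
from premise Ξ,↑Ψ,#Φ ⊢ M. -/
def MiEnv (Γ Γ' : Env4) : Prop := ∀ y,
  (Γ y = some Pat4.im ∧ Γ' y = some Pat4.lin) ∨
  (Γ y = some Pat4.cm ∧ Γ' y = some Pat4.cm) ∨
  (Γ y = some Pat4.am ∧ Γ' y = some Pat4.am) ∨
  (Γ y = some Pat4.dm ∧ Γ' y = none) ∨
  (Γ y = none ∧ Γ' y = none)

/-- Environment transformation of the coinductive (mc) rule: conclusion
↓Θ,↑Ξ,#Ψ ⊢ §M from premise #Ξ,#Ψ ⊢ M. -/
def McEnv (Γ Γ' : Env4) : Prop := ∀ y,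
  (Γ y = some Pat4.cm ∧ Γ' y = some Pat4.am) ∨
  (Γ y = some Pat4.am ∧ Γ' y = some Pat4.am) ∨
  (Γ y = some Pat4.dm ∧ Γ' y = none) ∨
  (Γ y = none ∧ Γ' y = none)

/-- The inductive well-formation rules of ℓΛ∞^{4S}. -/
inductive WF4Step (R : Env4 → T → Prop) : Env4 → T → Prop
  | base {Γ M} : R Γ M → WF4Step R Γ M
  | vl {Γ} (x) : Γ x = some Pat4.lin → Passive4 (Γ.upd x none) →
      WF4Step R Γ (mk0 (Shape.var x))
  | vd {Γ} (x) : Γ x = some Pat4.dm → Passive4 Γ → WF4Step R Γ (mk0 (Shape.var x))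
  | va {Γ} (x) : Γ x = some Pat4.am → Passive4 Γ → WF4Step R Γ (mk0 (Shape.var x))
  | app {Γ Γ₁ Γ₂ M N} : Split4 Γ Γ₁ Γ₂ → WF4Step R Γ₁ M → WF4Step R Γ₂ N →
      WF4Step R Γ (mk2 M N)
  | ll {Γ x M} : Γ x = none → WF4Step R (Γ.upd x (some Pat4.lin)) M →
      WF4Step R Γ (mk1 (Shape.labs x) M)
  | li1 {Γ x M} : Γ x = none → WF4Step R (Γ.upd x (some Pat4.dm)) M →
      WF4Step R Γ (mk1 (Shape.iabs x) M)
  | li2 {Γ x M} : Γ x = none → WF4Step R (Γ.upd x (some Pat4.im)) M →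
      WF4Step R Γ (mk1 (Shape.iabs x) M)
  | lc {Γ x M} : Γ x = none → WF4Step R (Γ.upd x (some Pat4.cm)) M →
      WF4Step R Γ (mk1 (Shape.cabs x) M)
  | mi {Γ Γ' M} : MiEnv Γ Γ' → WF4Step R Γ' M → WF4Step R Γ (mk1 Shape.ibox M)

/-- One application of the coinductive rule (mc) of ℓΛ∞^{4S}. -/
def CoStep4 (S : Env4 → T → Prop) (Γ : Env4) (M : T) : Prop :=
  ∃ Γ' N, McEnv Γ Γ' ∧ M = mk1 Shape.cbox N ∧ S Γ' N

/-- Well-formation in ℓΛ∞^{4S}. -/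
def WF4 (Γ : Env4) (M : T) : Prop :=
  ∃ S : Env4 → T → Prop, (∀ Δ N, S Δ N → WF4Step (CoStep4 S) Δ N) ∧ S Γ M

/-! ### Sizes, free occurrences, duplicability factors and weights -/

/-- The defining equations of the size |M|ₘ at depth m, as a relation. -/
inductive SizeRel : T → ℕ → ℕ → Prop
  | var0 (x) : SizeRel (mk0 (Shape.var x)) 0 1
  | ibox0 {M n} : SizeRel M 0 n → SizeRel (mk1 Shape.ibox M) 0 (n + 1)
  | cbox0 (M) : SizeRel (mk1 Shape.cbox M) 0 0
  | app0 {M N n p} : SizeRel M 0 n → SizeRel N 0 p →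
      SizeRel (mk2 M N) 0 (n + p + 1)
  | labs0 {M n} (x) : SizeRel M 0 n → SizeRel (mk1 (Shape.labs x) M) 0 (n + 1)
  | iabs0 {M n} (x) : SizeRel M 0 n → SizeRel (mk1 (Shape.iabs x) M) 0 (n + 1)
  | cabs0 {M n} (x) : SizeRel M 0 n → SizeRel (mk1 (Shape.cabs x) M) 0 (n + 1)
  | varS (x m) : SizeRel (mk0 (Shape.var x)) (m + 1) 0
  | iboxS {M m n} : SizeRel M (m + 1) n → SizeRel (mk1 Shape.ibox M) (m + 1) n
  | cboxS {M m n} : SizeRel M m n → SizeRel (mk1 Shape.cbox M) (m + 1) n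
  | appS {M N m n p} : SizeRel M (m + 1) n → SizeRel N (m + 1) p →
      SizeRel (mk2 M N) (m + 1) (n + p)
  | labsS {M m n} (x) : SizeRel M (m + 1) n → SizeRel (mk1 (Shape.labs x) M) (m + 1) n
  | iabsS {M m n} (x) : SizeRel M (m + 1) n → SizeRel (mk1 (Shape.iabs x) M) (m + 1) n
  | cabsS {M m n} (x) : SizeRel M (m + 1) n → SizeRel (mk1 (Shape.cabs x) M) (m + 1) n

/-- Number of free occurrences of `x`, as a relation. -/
inductive NFO (x : ℕ) : T → ℕ → Prop
  | varEq : NFO x (mk0 (Shape.var x)) 1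
  | varNe {y} : y ≠ x → NFO x (mk0 (Shape.var y)) 0
  | app {M N n p} : NFO x M n → NFO x N p → NFO x (mk2 M N) (n + p)
  | labsSh (M) : NFO x (mk1 (Shape.labs x) M) 0
  | labs {y M n} : y ≠ x → NFO x M n → NFO x (mk1 (Shape.labs y) M) n
  | iabsSh (M) : NFO x (mk1 (Shape.iabs x) M) 0
  | iabs {y M n} : y ≠ x → NFO x M n → NFO x (mk1 (Shape.iabs y) M) n
  | cabsSh (M) : NFO x (mk1 (Shape.cabs x) M) 0
  | cabs {y M n} : y ≠ x → NFO x M n → NFO x (mk1 (Shape.cabs y) M) n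
  | ibox {M n} : NFO x M n → NFO x (mk1 Shape.ibox M) n
  | cbox {M n} : NFO x M n → NFO x (mk1 Shape.cbox M) n
  | cboxNot {M} : ¬ Free x M → NFO x (mk1 Shape.cbox M) 0

/-- The defining equations of the duplicability factor Dₘ(M), as a relation. -/
inductive DRel : T → ℕ → ℕ → Prop
  | var0 (x) : DRel (mk0 (Shape.var x)) 0 1
  | ibox0 {M d} : DRel M 0 d → DRel (mk1 Shape.ibox M) 0 d
  | cbox0 (M) : DRel (mk1 Shape.cbox M) 0 1
  | app0 {M N d e} : DRel M 0 d → DRel N 0 e → DRel (mk2 M N) 0 (max d e)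
  | labs0 {M d} (x) : DRel M 0 d → DRel (mk1 (Shape.labs x) M) 0 d
  | cabs0 {M d} (x) : DRel M 0 d → DRel (mk1 (Shape.cabs x) M) 0 d
  | iabs0 {x M k d} : NFO x M k → DRel M 0 d →
      DRel (mk1 (Shape.iabs x) M) 0 (max k d)
  | varS (x m) : DRel (mk0 (Shape.var x)) (m + 1) 1
  | iboxS {M m d} : DRel M (m + 1) d → DRel (mk1 Shape.ibox M) (m + 1) d
  | cboxS {M m d} : DRel M m d → DRel (mk1 Shape.cbox M) (m + 1) d
  | appS {M N m d e} : DRel M (m + 1) d → DRel N (m + 1) e →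
      DRel (mk2 M N) (m + 1) (max d e)
  | labsS {M m d} (x) : DRel M (m + 1) d → DRel (mk1 (Shape.labs x) M) (m + 1) d
  | iabsS {M m d} (x) : DRel M (m + 1) d → DRel (mk1 (Shape.iabs x) M) (m + 1) d
  | cabsS {M m d} (x) : DRel M (m + 1) d → DRel (mk1 (Shape.cabs x) M) (m + 1) d

/-- The defining equations of the n-weight wⁿₘ(M), as a relation. -/
inductive WRel (n : ℕ) : T → ℕ → ℕ → Prop
  | var0 (x) : WRel n (mk0 (Shape.var x)) 0 1
  | ibox0 {M w} : WRel n M 0 w → WRel n (mk1 Shape.ibox M) 0 (n * w)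
  | cbox0 (M) : WRel n (mk1 Shape.cbox M) 0 0
  | app0 {M N w v} : WRel n M 0 w → WRel n N 0 v → WRel n (mk2 M N) 0 (w + v)
  | labs0 {M w} (x) : WRel n M 0 w → WRel n (mk1 (Shape.labs x) M) 0 (w + 1)
  | iabs0 {M w} (x) : WRel n M 0 w → WRel n (mk1 (Shape.iabs x) M) 0 (w + 1)
  | cabs0 {M w} (x) : WRel n M 0 w → WRel n (mk1 (Shape.cabs x) M) 0 (w + 1)
  | varS (x m) : WRel n (mk0 (Shape.var x)) (m + 1) 0
  | iboxS {M m w} : WRel n M (m + 1) w → WRel n (mk1 Shape.ibox M) (m + 1) w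
  | cboxS {M m w} : WRel n M m w → WRel n (mk1 Shape.cbox M) (m + 1) w
  | appS {M N m w v} : WRel n M (m + 1) w → WRel n N (m + 1) v →
      WRel n (mk2 M N) (m + 1) (w + v)
  | labsS {M m w} (x) : WRel n M (m + 1) w → WRel n (mk1 (Shape.labs x) M) (m + 1) w
  | iabsS {M m w} (x) : WRel n M (m + 1) w → WRel n (mk1 (Shape.iabs x) M) (m + 1) w
  | cabsS {M m w} (x) : WRel n M (m + 1) w → WRel n (mk1 (Shape.cabs x) M) (m + 1) w

/-- Wₘ(M) = w^{Dₘ(M)}ₘ(M): the weight of `M` at depth `m`. -/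
def TW (M : T) (m w : ℕ) : Prop := ∃ d, DRel M m d ∧ WRel d M m w

end LLInf

namespace LLInf


/-! ### Auxiliary lemmas -/

theorem substF_none' {x : ℕ} {N : T} :
    ∀ (q : List ℕ) {M : T}, (∀ p, M p = none) → substF x N M q = none
  | [], M, h => by rw [substF.eq_1, h []]; simp
  | i :: q, M, h => by
      have hrec := substF_none' (x := x) (N := N) q (M := child M i) (fun p => h (i :: p))
      rw [substF.eq_2, h [], hrec]; simp [bindsX]

theorem embF_cons_none {a : Bool} {M : T} (i : ℕ) (q : List ℕ)
    (h1 : M [] ≠ some Shape.app) (h2 : ∀ y, M [] ≠ some (Shape.labs y)) :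
    embF a M (i :: q) = none := by
  rcases hM : M [] with _ | s
  · cases q <;> simp [embF.eq_2, embF.eq_3, hM]
  · cases s with
    | var y => cases q <;> simp [embF.eq_2, embF.eq_3, hM]
    | app => exact absurd hM h1
    | labs y => exact absurd hM (h2 y)
    | iabs y => cases q <;> simp [embF.eq_2, embF.eq_3, hM]
    | cabs y => cases q <;> simp [embF.eq_2, embF.eq_3, hM]
    | ibox => cases q <;> simp [embF.eq_2, embF.eq_3, hM]
    | cbox => cases q <;> simp [embF.eq_2, embF.eq_3, hM]

theorem embF_cons_app0 {a : Bool} {M : T} (hM : M [] = some Shape.app) (q : List ℕ) :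
    embF a M (0 :: q) = embF a (child M 0) q := by
  cases q <;> simp [embF.eq_2, embF.eq_3, hM]

theorem embF_cons_app_ge {a : Bool} {M : T} (hM : M [] = some Shape.app) (i : ℕ) (q : List ℕ) :
    embF a M ((i+2) :: q) = none := by
  cases q <;> simp [embF.eq_2, embF.eq_3, hM]

theorem embF_cons_labs0 {a : Bool} {M : T} {y : ℕ} (hM : M [] = some (Shape.labs y)) (q : List ℕ) :
    embF a M (0 :: q) = embF a (child M 0) q := by
  cases q <;> simp [embF.eq_2, embF.eq_3, hM]

theorem embF_cons_labs_ge {a : Bool} {M : T} {y : ℕ} (hM : M [] = some (Shape.labs y)) (i : ℕ) (q : List ℕ) :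
    embF a M ((i+1) :: q) = none := by
  cases q <;> simp [embF.eq_2, embF.eq_3, hM]

theorem child_emb_app0 {a : Bool} {M : T} (hM : M [] = some Shape.app) :
    child (emb a M) 0 = emb a (child M 0) := by
  funext p; exact embF_cons_app0 hM p

theorem child_emb_app1 {a : Bool} {M : T} (hM : M [] = some Shape.app) :
    child (emb a M) 1 = mk1 (if a then Shape.cbox else Shape.ibox) (emb a (child M 1)) := by
  funext p
  show embF a M (1 :: p) = _
  cases p with
  | nil => rw [embF.eq_2, hM]; simp [mk1]
  | cons j r =>
      rcases j with _ | j <;> rw [embF.eq_3, hM] <;> simp [mk1, emb]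

theorem child_emb_labs0 {a : Bool} {M : T} {y : ℕ} (hM : M [] = some (Shape.labs y)) :
    child (emb a M) 0 = emb a (child M 0) := by
  funext p; exact embF_cons_labs0 hM p

theorem subst_root {x : ℕ} {N M : T} (hv : M [] ≠ some (Shape.var x)) :
    subst x N M [] = M [] := by
  show substF x N M [] = M []
  rw [substF.eq_1, if_neg hv]

theorem subst_var_root {x : ℕ} {N M : T} (hM : M [] = some (Shape.var x)) :
    subst x N M = N := by
  funext p
  cases p with
  | nil => show substF x N M [] = N []; rw [substF.eq_1, if_pos hM]
  | cons i q => show substF x N M (i :: q) = N (i :: q); rw [substF.eq_2, if_pos hM]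

theorem subst_shadow {x : ℕ} {N M : T} (hb : bindsX x (M []) = true) :
    subst x N M = M := by
  have hv : M [] ≠ some (Shape.var x) := by
    intro h; rw [h] at hb; simp [bindsX] at hb
  funext p
  cases p with
  | nil => exact subst_root hv
  | cons i q =>
      show substF x N M (i :: q) = M (i :: q)
      rw [substF.eq_2, if_neg hv, if_pos hb]

theorem child_subst {x : ℕ} {N M : T} (hv : M [] ≠ some (Shape.var x))
    (hb : bindsX x (M []) = false) (i : ℕ) :
    child (subst x N M) i = subst x N (child M i) := by
  funext p
  show substF x N M (i :: p) = substF x N (child M i) p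
  rw [substF.eq_2, if_neg hv, if_neg (by simp [hb])]

theorem emb_subst_nil (a : Bool) (x : ℕ) (N M : T) :
    embF a (subst x N M) [] = substF x (emb a N) (emb a M) [] := by
  have hL : subst x N M [] = if M [] = some (Shape.var x) then N [] else M [] :=
    substF.eq_1 x N M
  rw [embF.eq_1, substF.eq_1, hL]
  show _ = if embF a M [] = some (Shape.var x) then embF a N [] else embF a M []
  rw [embF.eq_1 a M, embF.eq_1 a N]
  rcases hM : M [] with _ | s
  · simp
  · cases s with
    | var y =>
        by_cases hxy : y = x
        · subst hxy; simp
        · simp [hxy]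
    | app => simp
    | labs y => cases a <;> simp
    | iabs y => simp
    | cabs y => simp
    | ibox => simp
    | cbox => simp

theorem both_none (a : Bool) (x : ℕ) (N M : T) (i : ℕ) (q : List ℕ)
    (h1 : M [] ≠ some Shape.app) (h2 : ∀ y, M [] ≠ some (Shape.labs y))
    (h3 : M [] ≠ some (Shape.var x)) :
    embF a (subst x N M) (i :: q) = substF x (emb a N) (emb a M) (i :: q) := by
  have hroot : subst x N M [] = M [] := subst_root h3
  have hchild : ∀ p, child (emb a M) i p = none := fun p => embF_cons_none i p h1 h2
  have hnone : substF x (emb a N) (child (emb a M) i) q = none := substF_none' q hchild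
  have hL : embF a (subst x N M) (i :: q) = none :=
    embF_cons_none i q (by rw [hroot]; exact h1) (fun y => by rw [hroot]; exact h2 y)
  rw [hL, substF.eq_2]
  rcases hM : M [] with _ | s
  · have hE : emb a M [] = none := by show embF a M [] = _; rw [embF.eq_1, hM]
    rw [hE, if_neg (by simp), if_neg (by simp [bindsX])]; exact hnone.symm
  · cases s with
    | var y =>
        have hyx : y ≠ x := fun h => h3 (by rw [hM, h])
        have hE : emb a M [] = some (Shape.var y) := by
          show embF a M [] = _; rw [embF.eq_1, hM]
        rw [hE]; simp [bindsX, hyx, hnone.symm]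
    | app => exact absurd hM h1
    | labs y => exact absurd hM (h2 y)
    | iabs y =>
        have hE : emb a M [] = none := by show embF a M [] = _; rw [embF.eq_1, hM]
        rw [hE, if_neg (by simp), if_neg (by simp [bindsX])]; exact hnone.symm
    | cabs y =>
        have hE : emb a M [] = none := by show embF a M [] = _; rw [embF.eq_1, hM]
        rw [hE, if_neg (by simp), if_neg (by simp [bindsX])]; exact hnone.symm
    | ibox =>
        have hE : emb a M [] = none := by show embF a M [] = _; rw [embF.eq_1, hM]
        rw [hE, if_neg (by simp), if_neg (by simp [bindsX])]; exact hnone.symm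
    | cbox =>
        have hE : emb a M [] = none := by show embF a M [] = _; rw [embF.eq_1, hM]
        rw [hE, if_neg (by simp), if_neg (by simp [bindsX])]; exact hnone.symm

theorem emb_substF (a : Bool) (x : ℕ) (N : T) :
    ∀ (fuel : ℕ) (p : List ℕ), p.length ≤ fuel → ∀ M : T,
      embF a (subst x N M) p = substF x (emb a N) (emb a M) p := by
  intro fuel
  induction fuel with
  | zero =>
      intro p hp M
      cases p with
      | nil => exact emb_subst_nil a x N M
      | cons i q => simp at hp
  | succ n ih =>
      intro p hp M
      cases p with
      | nil => exact emb_subst_nil a x N M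
      | cons i q =>
        have hq : q.length ≤ n := by simpa using hp
        rcases hM : M [] with _ | s
        · exact both_none a x N M i q (by simp [hM]) (by simp [hM]) (by simp [hM])
        · cases s with
          | var y =>
            by_cases hxy : y = x
            · subst hxy
              have hs : subst y N M = N := subst_var_root hM
              have hE : emb a M [] = some (Shape.var y) := by
                show embF a M [] = _; rw [embF.eq_1, hM]
              rw [hs, substF.eq_2, hE, if_pos rfl]
              rfl
            · exact both_none a x N M i q (by simp [hM]) (by simp [hM])
                (by simp [hM, hxy])
          | app =>
            have hv : M [] ≠ some (Shape.var x) := by simp [hM]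
            have hb : bindsX x (M []) = false := by rw [hM]; rfl
            have hroot : subst x N M [] = some Shape.app := (subst_root hv).trans hM
            have hcs := child_subst (N := N) hv hb
            have hE : emb a M [] = some Shape.app := by
              show embF a M [] = _; rw [embF.eq_1, hM]
            rw [substF.eq_2, hE, if_neg (by simp), if_neg (by simp [bindsX])]
            rcases i with _ | _ | i
            · rw [embF_cons_app0 hroot, hcs 0, child_emb_app0 hM]
              exact ih q hq (child M 0)
            · -- i = 1
              have hc1 : child (emb a M) 1 [] =
                  some (if a then Shape.cbox else Shape.ibox) := by
                show embF a M [1] = _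
                rw [embF.eq_2, hM]; simp
              rcases q with _ | ⟨j, r⟩
              · rw [substF.eq_1, hc1, if_neg (by cases a <;> simp),
                  embF.eq_2, hroot]
                simp
              · have hr2 : r.length ≤ n := le_trans (by simp) hq
                rw [substF.eq_2, hc1, if_neg (by cases a <;> simp),
                  if_neg (by cases a <;> simp [bindsX])]
                rw [embF.eq_3, hroot]
                rcases j with _ | j
                · have hcc : child (child (emb a M) 1) 0 = emb a (child M 1) := by
                    funext p
                    show embF a M (1 :: 0 :: p) = embF a (child M 1) p
                    rw [embF.eq_3, hM]; simp [emb]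
                  have hih := ih r hr2 (child M 1)
                  simpa [hcs 1, hcc] using hih
                · have hccn : ∀ p, child (child (emb a M) 1) (j+1) p = none := by
                    intro p
                    show embF a M (1 :: (j+1) :: p) = none
                    rw [embF.eq_3, hM]; simp
                  rw [substF_none' r hccn]
                  simp
            · have hnone : substF x (emb a N) (child (emb a M) (i+2)) q = none :=
                substF_none' q (fun p => embF_cons_app_ge hM i p)
              rw [embF_cons_app_ge hroot, hnone]
          | labs y =>
            by_cases hxy : y = x
            · subst hxy
              have hb : bindsX y (M []) = true := by rw [hM]; simp [bindsX]
              have hs : subst y N M = M := subst_shadow hb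
              have hE : emb a M [] =
                  some (if a then Shape.cabs y else Shape.iabs y) := by
                show embF a M [] = _; rw [embF.eq_1, hM]
              rw [hs, substF.eq_2, hE, if_neg (by cases a <;> simp),
                if_pos (by cases a <;> simp [bindsX])]
              rfl
            · have hv : M [] ≠ some (Shape.var x) := by simp [hM]
              have hb : bindsX x (M []) = false := by rw [hM]; simp [bindsX, hxy]
              have hroot : subst x N M [] = some (Shape.labs y) :=
                (subst_root hv).trans hM
              have hE : emb a M [] =
                  some (if a then Shape.cabs y else Shape.iabs y) := by
                show embF a M [] = _; rw [embF.eq_1, hM]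
              rw [substF.eq_2, hE, if_neg (by cases a <;> simp),
                if_neg (by cases a <;> simp [bindsX, hxy])]
              rcases i with _ | i
              · rw [embF_cons_labs0 hroot, child_subst hv hb 0, child_emb_labs0 hM]
                exact ih q hq (child M 0)
              · have hnone : substF x (emb a N) (child (emb a M) (i+1)) q = none :=
                  substF_none' q (fun p => embF_cons_labs_ge hM i p)
                rw [embF_cons_labs_ge hroot, hnone]
          | iabs y =>
            exact both_none a x N M i q (by simp [hM]) (by simp [hM]) (by simp [hM])
          | cabs y =>
            exact both_none a x N M i q (by simp [hM]) (by simp [hM]) (by simp [hM])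
          | ibox =>
            exact both_none a x N M i q (by simp [hM]) (by simp [hM]) (by simp [hM])
          | cbox =>
            exact both_none a x N M i q (by simp [hM]) (by simp [hM]) (by simp [hM])

theorem emb_subst (a : Bool) (x : ℕ) (N M : T) :
    emb a (subst x N M) = subst x (emb a N) (emb a M) := by
  funext p
  exact emb_substF a x N p.length p le_rfl M

/-! ### Structural equations for the embedding -/

theorem emb_mk0 (a : Bool) (x : ℕ) : emb a (mk0 (Shape.var x)) = mk0 (Shape.var x) := by
  funext p
  cases p with
  | nil =>
      show embF a (mk0 (Shape.var x)) [] = _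
      rw [embF.eq_1]; rfl
  | cons i q =>
      show embF a (mk0 (Shape.var x)) (i :: q) = _
      rw [embF_cons_none i q (by simp [mk0]) (by simp [mk0])]
      simp [mk0]

theorem emb_mk2 (a : Bool) (M N : T) :
    emb a (mk2 M N) =
      mk2 (emb a M) (mk1 (if a then Shape.cbox else Shape.ibox) (emb a N)) := by
  have hr : (mk2 M N) [] = some Shape.app := rfl
  funext p
  show embF a (mk2 M N) p = _
  match p with
  | [] => rw [embF.eq_1]; rfl
  | 0 :: q => rw [embF_cons_app0 hr]; rfl
  | [1] => rw [embF.eq_2]; rfl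
  | 1 :: 0 :: r => rw [embF.eq_3]; rfl
  | 1 :: (j+1) :: r => rw [embF.eq_3]; rfl
  | (i+2) :: q => rw [embF_cons_app_ge hr]; rfl

theorem emb_labs (a : Bool) (x : ℕ) (M : T) :
    emb a (mk1 (Shape.labs x) M) =
      mk1 (if a then Shape.cabs x else Shape.iabs x) (emb a M) := by
  have hr : (mk1 (Shape.labs x) M) [] = some (Shape.labs x) := rfl
  funext p
  show embF a (mk1 (Shape.labs x) M) p = _
  match p with
  | [] => rw [embF.eq_1]; rfl
  | 0 :: q => rw [embF_cons_labs0 hr]; rfl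
  | (i+1) :: q => rw [embF_cons_labs_ge hr]; rfl

/-! ### Injectivity of the constructors -/

theorem mk2_inj {A B A' B' : T} (h : mk2 A B = mk2 A' B') : A = A' ∧ B = B' :=
  ⟨funext fun p => congrFun h (0 :: p), funext fun p => congrFun h (1 :: p)⟩

theorem mk1_inj {s t : Shape} {M N : T} (h : mk1 s M = mk1 t N) : s = t ∧ M = N :=
  ⟨by have := congrFun h []; simpa [mk1] using this,
   funext fun p => congrFun h (0 :: p)⟩

/-! ### Structure of Λ₀₀ₐ terms -/

theorem lamStep_mono {a : Bool} {S S' : T → Prop} (h : ∀ P, S P → S' P) :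
    ∀ {M}, LamStep a S M → LamStep a S' M := by
  intro M hM
  induction hM with
  | var x => exact .var x
  | app0 ha h1 h2 ih1 ih2 => exact .app0 ha ih1 ih2
  | app1 ha h1 hN ih1 => exact .app1 ha ih1 (h _ hN)
  | lam x h1 ih => exact .lam x ih

theorem lam00_of_lamStep {a : Bool} {S : T → Prop}
    (hS : ∀ P, S P → LamStep a S P) {M : T} (h : LamStep a S M) : Lam00 a M :=
  ⟨LamStep a S, fun _ hP => lamStep_mono hS hP, h⟩

theorem emb_cases {a : Bool} {M : T} (h : Lam00 a M) :
    (∃ x, M = mk0 (Shape.var x) ∧ emb a M = mk0 (Shape.var x)) ∨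
    (∃ M1 M2, M = mk2 M1 M2 ∧ Lam00 a M1 ∧ Lam00 a M2 ∧
      emb a M = mk2 (emb a M1)
        (mk1 (if a then Shape.cbox else Shape.ibox) (emb a M2))) ∨
    (∃ x M1, M = mk1 (Shape.labs x) M1 ∧ Lam00 a M1 ∧
      emb a M = mk1 (if a then Shape.cabs x else Shape.iabs x) (emb a M1)) := by
  obtain ⟨S, hS, hM⟩ := h
  cases hS M hM with
  | var x => exact .inl ⟨x, rfl, emb_mk0 a x⟩
  | app0 ha h1 h2 =>
      exact .inr (.inl ⟨_, _, rfl, lam00_of_lamStep hS h1, lam00_of_lamStep hS h2,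
        emb_mk2 a _ _⟩)
  | app1 ha h1 hN =>
      exact .inr (.inl ⟨_, _, rfl, lam00_of_lamStep hS h1, ⟨S, hS, hN⟩,
        emb_mk2 a _ _⟩)
  | lam x h1 =>
      exact .inr (.inr ⟨x, _, rfl, lam00_of_lamStep hS h1, emb_labs a x _⟩)

/-! ### Forward simulation -/

theorem sim_fwd (a : Bool) {n : ℕ} {M N : T} (h : LRed a n M N) :
    ∃ s : List Bool, s.count true = n ∧ Red s (emb a M) (emb a N) := by
  induction h with
  | beta x M N =>
      refine ⟨[], by simp, ?_⟩
      rw [emb_mk2, emb_labs, emb_subst]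
      cases a
      · exact .base (.ind x _ _)
      · exact .base (.coi x _ _)
  | appL P h ih =>
      obtain ⟨s, hc, hr⟩ := ih
      exact ⟨s, hc, by rw [emb_mk2, emb_mk2]; exact .appL _ hr⟩
  | lam x h ih =>
      obtain ⟨s, hc, hr⟩ := ih
      refine ⟨s, hc, ?_⟩
      rw [emb_labs, emb_labs]
      cases a
      · exact .iabs _ hr
      · exact .cabs _ hr
  | appR0 P ha h ih =>
      obtain ⟨s, hc, hr⟩ := ih
      subst ha
      refine ⟨false :: s, by simp [hc], ?_⟩
      rw [emb_mk2, emb_mk2]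
      exact .appR _ (.ibox hr)
  | appR1 P ha h ih =>
      obtain ⟨s, hc, hr⟩ := ih
      subst ha
      refine ⟨true :: s, by simp [hc], ?_⟩
      rw [emb_mk2, emb_mk2]
      exact .appR _ (.cbox hr)

/-! ### Backward simulation -/

theorem sim_back (a : Bool) {s : List Bool} {E N : T} (hr : Red s E N) :
    ∀ M : T, Lam00 a M →
      (E = emb a M → ∃ L, LRed a (s.count true) M L ∧ emb a L = N) ∧
      (E = mk1 (if a then Shape.cbox else Shape.ibox) (emb a M) →
        ∃ s' L, s = a :: s' ∧ LRed a (s'.count true) M L ∧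
          N = mk1 (if a then Shape.cbox else Shape.ibox) (emb a L)) := by
  induction hr with
  | @base E N hB =>
      intro M hM
      constructor
      · intro hE
        cases hB with
        | lin x A B =>
            rcases emb_cases hM with ⟨y, rfl, hemb⟩ | ⟨M1, M2, rfl, h1, h2, hemb⟩ |
              ⟨y, M1, rfl, h1, hemb⟩
            · rw [hemb] at hE
              have := congrFun hE []; simp [mk0, mk2] at this
            · rw [hemb] at hE
              obtain ⟨e1, e2⟩ := mk2_inj hE
              rcases emb_cases h1 with ⟨z, rfl, hemb1⟩ | ⟨P1, P2, rfl, _, _, hemb1⟩ |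
                ⟨z, P1, rfl, _, hemb1⟩
              · rw [hemb1] at e1
                have := congrFun e1 []; simp [mk0, mk1] at this
              · rw [hemb1] at e1
                have := congrFun e1 []; cases a <;> simp [mk1, mk2] at this
              · rw [hemb1] at e1
                have := (mk1_inj e1).1
                cases a <;> simp at this
            · rw [hemb] at hE
              have := congrFun hE []; cases a <;> simp [mk1, mk2] at this
        | ind x A B =>
            rcases emb_cases hM with ⟨y, rfl, hemb⟩ | ⟨M1, M2, rfl, h1, h2, hemb⟩ |
              ⟨y, M1, rfl, h1, hemb⟩
            · rw [hemb] at hE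
              have := congrFun hE []; simp [mk0, mk2] at this
            · rw [hemb] at hE
              obtain ⟨e1, e2⟩ := mk2_inj hE
              obtain ⟨eb, eB⟩ := mk1_inj e2
              have ha : a = false := by
                cases a with | false => rfl | true => simp at eb
              subst ha
              rcases emb_cases h1 with ⟨z, rfl, hemb1⟩ | ⟨P1, P2, rfl, _, _, hemb1⟩ |
                ⟨z, P1, rfl, _, hemb1⟩
              · rw [hemb1] at e1
                have := congrFun e1 []; simp [mk0, mk1] at this
              · rw [hemb1] at e1
                have := congrFun e1 []; simp [mk1, mk2] at this
              · rw [hemb1] at e1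
                obtain ⟨es, eM⟩ := mk1_inj e1
                simp at es
                refine ⟨subst z M2 P1, by simpa using LRed.beta z P1 M2, ?_⟩
                rw [emb_subst, eM, eB]
                rw [es]
            · rw [hemb] at hE
              have := congrFun hE []; cases a <;> simp [mk1, mk2] at this
        | coi x A B =>
            rcases emb_cases hM with ⟨y, rfl, hemb⟩ | ⟨M1, M2, rfl, h1, h2, hemb⟩ |
              ⟨y, M1, rfl, h1, hemb⟩
            · rw [hemb] at hE
              have := congrFun hE []; simp [mk0, mk2] at this
            · rw [hemb] at hE
              obtain ⟨e1, e2⟩ := mk2_inj hE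
              obtain ⟨eb, eB⟩ := mk1_inj e2
              have ha : a = true := by
                cases a with | true => rfl | false => simp at eb
              subst ha
              rcases emb_cases h1 with ⟨z, rfl, hemb1⟩ | ⟨P1, P2, rfl, _, _, hemb1⟩ |
                ⟨z, P1, rfl, _, hemb1⟩
              · rw [hemb1] at e1
                have := congrFun e1 []; simp [mk0, mk1] at this
              · rw [hemb1] at e1
                have := congrFun e1 []; simp [mk1, mk2] at this
              · rw [hemb1] at e1
                obtain ⟨es, eM⟩ := mk1_inj e1
                simp at es
                refine ⟨subst z M2 P1, by simpa using LRed.beta z P1 M2, ?_⟩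
                rw [emb_subst, eM, eB]
                rw [es]
            · rw [hemb] at hE
              have := congrFun hE []; cases a <;> simp [mk1, mk2] at this
      · intro hE
        cases hB <;>
          · have := congrFun hE []; cases a <;> simp [mk1, mk2] at this
  | @appL s A A' P h ih =>
      intro M hM
      constructor
      · intro hE
        rcases emb_cases hM with ⟨y, rfl, hemb⟩ | ⟨M1, M2, rfl, h1, h2, hemb⟩ |
          ⟨y, M1, rfl, h1, hemb⟩
        · rw [hemb] at hE
          have := congrFun hE []; simp [mk0, mk2] at this
        · rw [hemb] at hE
          obtain ⟨e1, e2⟩ := mk2_inj hE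
          obtain ⟨L1, hL1, hembL1⟩ := (ih M1 h1).1 e1
          refine ⟨mk2 L1 M2, LRed.appL M2 hL1, ?_⟩
          rw [emb_mk2, hembL1, e2]
        · rw [hemb] at hE
          have := congrFun hE []; cases a <;> simp [mk1, mk2] at this
      · intro hE
        have := congrFun hE []; cases a <;> simp [mk1, mk2] at this
  | @appR s A A' P h ih =>
      intro M hM
      constructor
      · intro hE
        rcases emb_cases hM with ⟨y, rfl, hemb⟩ | ⟨M1, M2, rfl, h1, h2, hemb⟩ |
          ⟨y, M1, rfl, h1, hemb⟩
        · rw [hemb] at hE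
          have := congrFun hE []; simp [mk0, mk2] at this
        · rw [hemb] at hE
          obtain ⟨e1, e2⟩ := mk2_inj hE
          obtain ⟨s', L2, hs, hL2, hN⟩ := (ih M2 h2).2 e2
          subst hs
          refine ⟨mk2 M1 L2, ?_, ?_⟩
          · cases a
            · simpa using LRed.appR0 M1 rfl hL2
            · simpa using LRed.appR1 M1 rfl hL2
          · rw [emb_mk2, e1, hN]
        · rw [hemb] at hE
          have := congrFun hE []; cases a <;> simp [mk1, mk2] at this
      · intro hE
        have := congrFun hE []; cases a <;> simp [mk1, mk2] at this
  | @labs s A A' x h ih =>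
      intro M hM
      constructor
      · intro hE
        rcases emb_cases hM with ⟨y, rfl, hemb⟩ | ⟨M1, M2, rfl, h1, h2, hemb⟩ |
          ⟨y, M1, rfl, h1, hemb⟩
        · rw [hemb] at hE
          have := congrFun hE []; simp [mk0, mk1] at this
        · rw [hemb] at hE
          have := congrFun hE []; cases a <;> simp [mk1, mk2] at this
        · rw [hemb] at hE
          have := (mk1_inj hE).1
          cases a <;> simp at this
      · intro hE
        have := (mk1_inj hE).1
        cases a <;> simp at this
  | @iabs s A A' x h ih =>
      intro M hM
      constructor
      · intro hE
        rcases emb_cases hM with ⟨y, rfl, hemb⟩ | ⟨M1, M2, rfl, h1, h2, hemb⟩ |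
          ⟨y, M1, rfl, h1, hemb⟩
        · rw [hemb] at hE
          have := congrFun hE []; simp [mk0, mk1] at this
        · rw [hemb] at hE
          have := congrFun hE []; cases a <;> simp [mk1, mk2] at this
        · rw [hemb] at hE
          obtain ⟨es, eM⟩ := mk1_inj hE
          have ha : a = false := by
            cases a with | false => rfl | true => simp at es
          subst ha
          simp at es
          obtain ⟨L1, hL1, hembL1⟩ := (ih M1 h1).1 eM
          refine ⟨mk1 (Shape.labs y) L1, LRed.lam y hL1, ?_⟩
          rw [emb_labs, hembL1]
          simp [es]
      · intro hE
        have := (mk1_inj hE).1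
        cases a <;> simp at this
  | @cabs s A A' x h ih =>
      intro M hM
      constructor
      · intro hE
        rcases emb_cases hM with ⟨y, rfl, hemb⟩ | ⟨M1, M2, rfl, h1, h2, hemb⟩ |
          ⟨y, M1, rfl, h1, hemb⟩
        · rw [hemb] at hE
          have := congrFun hE []; simp [mk0, mk1] at this
        · rw [hemb] at hE
          have := congrFun hE []; cases a <;> simp [mk1, mk2] at this
        · rw [hemb] at hE
          obtain ⟨es, eM⟩ := mk1_inj hE
          have ha : a = true := by
            cases a with | true => rfl | false => simp at es
          subst ha
          simp at es
          obtain ⟨L1, hL1, hembL1⟩ := (ih M1 h1).1 eM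
          refine ⟨mk1 (Shape.labs y) L1, LRed.lam y hL1, ?_⟩
          rw [emb_labs, hembL1]
          simp [es]
      · intro hE
        have := (mk1_inj hE).1
        cases a <;> simp at this
  | @ibox s A A' h ih =>
      intro M hM
      constructor
      · intro hE
        rcases emb_cases hM with ⟨y, rfl, hemb⟩ | ⟨M1, M2, rfl, h1, h2, hemb⟩ |
          ⟨y, M1, rfl, h1, hemb⟩
        · rw [hemb] at hE
          have := congrFun hE []; simp [mk0, mk1] at this
        · rw [hemb] at hE
          have := congrFun hE []; cases a <;> simp [mk1, mk2] at this
        · rw [hemb] at hE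
          have := (mk1_inj hE).1
          cases a <;> simp at this
      · intro hE
        obtain ⟨es, eM⟩ := mk1_inj hE
        have ha : a = false := by
          cases a with | false => rfl | true => simp at es
        subst ha
        obtain ⟨L, hL, hembL⟩ := (ih M hM).1 eM
        exact ⟨s, L, rfl, hL, by simp [hembL]⟩
  | @cbox s A A' h ih =>
      intro M hM
      constructor
      · intro hE
        rcases emb_cases hM with ⟨y, rfl, hemb⟩ | ⟨M1, M2, rfl, h1, h2, hemb⟩ |
          ⟨y, M1, rfl, h1, hemb⟩
        · rw [hemb] at hE
          have := congrFun hE []; simp [mk0, mk1] at this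
        · rw [hemb] at hE
          have := congrFun hE []; cases a <;> simp [mk1, mk2] at this
        · rw [hemb] at hE
          have := (mk1_inj hE).1
          cases a <;> simp at this
      · intro hE
        obtain ⟨es, eM⟩ := mk1_inj hE
        have ha : a = true := by
          cases a with | true => rfl | false => simp at es
        subst ha
        obtain ⟨L, hL, hembL⟩ := (ih M hM).1 eM
        exact ⟨s, L, rfl, hL, by simp [hembL]⟩

/-- Perfect simulation: a depth-`n` step of Λ_{00a} is simulated by one step of
ℓΛ∞ at a level with exactly `n` coinductive boxes, and conversely every step
from ⟨M⟩ₐ comes from a step of M. -/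
theorem perfect_simulation (a : Bool) :
    (∀ M N : T, ∀ n : ℕ, Lam00 a M → LRed a n M N →
      ∃ s : List Bool, s.count true = n ∧ Red s (emb a M) (emb a N)) ∧
    (∀ M : T, ∀ N : T, ∀ s : List Bool, Lam00 a M → Red s (emb a M) N →
      ∃ L : T, LRed a (s.count true) M L ∧ emb a L = N) := by
  constructor
  · intro M N n _ h
    exact sim_fwd a h
  · intro M N s hM hr
    exact (sim_back a hr M hM).1 rfl

end LLInf
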